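/- Let ε > 0 and define u(x) = exp((x² − 1)/(2ε)) · (Erf(x/√(2ε)) + 3·Erf(1/√(2ε))) / (2·Erf(1/√(2ε))) for x ∈ [−1,1], where Erf(z) = (2/√π)∫₀^z exp(−t²) dt. Then u satisfies ε·u''(x) − x·u'(x) − u(x) = 0 for all x ∈ (−1,1), with u(−1) = 1 and u(1) = 2. -/

import Mathlib

theorem stmt_4 (ε : ℝ) (hε : 0 < ε) (Erf u : ℝ → ℝ)
    (hErf : ∀ z : ℝ, Erf z = (2 / Real.sqrt Real.pi) * ∫ t in (0:ℝ)..z, Real.exp (-t^2))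
    (hu : ∀ x : ℝ, u x = Real.exp ((x^2 - 1)/(2*ε)) *
      (Erf (x / Real.sqrt (2*ε)) + 3 * Erf (1 / Real.sqrt (2*ε))) /
        (2 * Erf (1 / Real.sqrt (2*ε)))) :
    (∀ x ∈ Set.Ioo (-1:ℝ) 1, ε * deriv (deriv u) x - x * deriv u x - u x = 0) ∧
      u (-1) = 1 ∧ u 1 = 2 := by
  have hπ : 0 < Real.sqrt Real.pi := Real.sqrt_pos.2 Real.pi_pos
  set k : ℝ := 2 / Real.sqrt Real.pi with hk
  have hk0 : 0 < k := by positivity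
  set s : ℝ := Real.sqrt (2*ε) with hs
  have hs0 : 0 < s := Real.sqrt_pos.2 (by linarith)
  have hs2 : s^2 = 2*ε := Real.sq_sqrt (by linarith)
  have hε0 : (ε:ℝ) ≠ 0 := ne_of_gt hε
  have hcont : Continuous fun t : ℝ => Real.exp (-t^2) := by continuity
  have hErfD : ∀ z : ℝ, HasDerivAt Erf (k * Real.exp (-z^2)) z := by
    intro z
    have hE : Erf = fun z => k * ∫ t in (0:ℝ)..z, Real.exp (-t^2) := funext hErf
    rw [hE]
    exact ((hcont.integral_hasStrictDerivAt 0 z).hasDerivAt).const_mul k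
  set A : ℝ := Erf (1/s) with hA
  have hApos : 0 < A := by
    rw [hA, hErf]
    apply mul_pos hk0
    apply intervalIntegral.intervalIntegral_pos_of_pos
    · exact hcont.intervalIntegrable 0 (1/s)
    · intro x; positivity
    · positivity
  have hA0 : A ≠ 0 := ne_of_gt hApos
  have hodd : Erf (-(1/s)) = -A := by
    rw [hA, hErf, hErf]
    have h1 : (∫ t in (0:ℝ)..(-(1/s)), Real.exp (-t^2))
        = -∫ t in (0:ℝ)..(1/s), Real.exp (-t^2) := by
      rw [intervalIntegral.integral_symm]
      have h2 := intervalIntegral.integral_comp_neg (a := (0:ℝ)) (b := 1/s)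
        (fun t => Real.exp (-t^2))
      simp only [neg_zero] at h2
      congr 1
      rw [← h2]
      simp [neg_sq]
    rw [h1]; ring
  -- building blocks
  set E : ℝ → ℝ := fun x => Real.exp ((x^2 - 1)/(2*ε)) with hE
  set g : ℝ → ℝ := fun x => Erf (x/s) + 3*A with hg
  set gp : ℝ → ℝ := fun x => k * Real.exp (-(x^2)/(2*ε)) / s with hgp
  set c : ℝ := 2*A with hc
  have hED : ∀ x : ℝ, HasDerivAt E (E x * (x/ε)) x := by
    intro x
    have h1 : HasDerivAt (fun x : ℝ => (x^2 - 1)/(2*ε)) (x/ε) x := by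
      have : HasDerivAt (fun x : ℝ => x^2 - 1) (2*x) x := by
        simpa using ((hasDerivAt_pow 2 x).sub_const 1)
      have := this.div_const (2*ε)
      refine this.congr_deriv ?_
      field_simp
    simpa [hE] using h1.exp
  have hgD : ∀ x : ℝ, HasDerivAt g (gp x) x := by
    intro x
    have h1 : HasDerivAt (fun x : ℝ => Erf (x/s)) (k * Real.exp (-(x/s)^2) * (1/s)) x := by
      have := (hErfD (x/s)).comp x ((hasDerivAt_id x).div_const s)
      exact this.congr_deriv (by simp)
    have h2 : -(x/s)^2 = -(x^2)/(2*ε) := by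
      rw [div_pow, hs2]; ring
    rw [h2] at h1
    simpa [hg, hgp, div_eq_mul_inv, mul_assoc] using h1.add_const (3*A)
  set w : ℝ → ℝ := fun x => E x * ((x/ε) * g x + gp x) / c with hw
  have huD : ∀ x : ℝ, HasDerivAt u (w x) x := by
    intro x
    have hufun : u = fun x => E x * g x / c := by
      funext x; rw [hu x, hE, hg, hc, hA, hs]
    rw [hufun, hw]
    have := (((hED x).mul (hgD x)).div_const c)
    refine this.congr_deriv ?_
    field_simp
  have hderivu : deriv u = w := funext fun x => (huD x).deriv
  have hgpD : ∀ x : ℝ, HasDerivAt gp (k * Real.exp (-(x^2)/(2*ε)) * (-(x/ε)) / s) x := by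
    intro x
    have h1 : HasDerivAt (fun x : ℝ => -(x^2)/(2*ε)) (-(x/ε)) x := by
      have : HasDerivAt (fun x : ℝ => -(x^2)) (-(2*x)) x := by
        exact (hasDerivAt_pow 2 x).neg.congr_deriv (by norm_num)
      have := this.div_const (2*ε)
      refine this.congr_deriv ?_
      field_simp
    have := ((h1.exp.const_mul k).div_const s)
    refine this.congr_deriv ?_
    ring
  have hwD : ∀ x : ℝ, HasDerivAt w
      ((E x * (x/ε) * ((x/ε) * g x + gp x)
        + E x * ((1/ε) * g x + (x/ε) * gp x + k * Real.exp (-(x^2)/(2*ε)) * (-(x/ε)) / s)) / c) x := by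
    intro x
    have hinner : HasDerivAt (fun x => (x/ε) * g x + gp x)
        ((1/ε) * g x + (x/ε) * gp x + k * Real.exp (-(x^2)/(2*ε)) * (-(x/ε)) / s) x := by
      have h1 : HasDerivAt (fun x : ℝ => x/ε) (1/ε) x := by
        simpa using (hasDerivAt_id x).div_const ε
      exact ((h1.mul (hgD x)).add (hgpD x))
    have := ((hED x).mul hinner).div_const c
    exact this
  have hc0 : c ≠ 0 := by rw [hc]; positivity
  refine ⟨?_, ?_, ?_⟩
  · intro x _
    rw [hderivu, (hwD x).deriv, hw, hu x]
    simp only [hE, hg, hgp]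
    field_simp
    ring
  · rw [hu]
    have h1 : ((-1:ℝ)^2 - 1)/(2*ε) = 0 := by norm_num
    have h2 : (-1:ℝ)/s = -(1/s) := by ring
    rw [h1, h2, hodd, Real.exp_zero, hc]
    field_simp
    ring
  · rw [hu]
    have h1 : ((1:ℝ)^2 - 1)/(2*ε) = 0 := by norm_num
    rw [h1, Real.exp_zero, hc, ← hA]
    field_simp
    ring
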